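/- Consider N₀ + N₁ bits a₁,…,a_{N₀+N₁} with exactly N₀ zeros and N₁ ones, partitioned uniformly at random into k = (N₀+N₁)/n ordered groups A₁,…,A_k each of size n (assuming n divides N₀+N₁). Let Yᵢ = ⊕_{a ∈ Aᵢ} a be the parity of the bits in group Aᵢ. Then for any δ > 0 there exists N' such that whenever min{N₀, N₁} ≥ N', the covariance satisfies Cov[Yᵢ, Yⱼ] ≤ δ · (E[Y₁])² for all i ≠ j. -/

import Mathlib

open Finset

noncomputable section

/-- Expectation of a real function of a uniformly random permutation of `Fin N`. -/
def permExp (N : ℕ) (f : Equiv.Perm (Fin N) → ℝ) : ℝ :=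
  (∑ σ : Equiv.Perm (Fin N), f σ) / (Fintype.card (Equiv.Perm (Fin N)) : ℝ)

/-- The parity indicator of group `i`: partition `Fin (k * n)` into `k` ordered groups of
size `n` according to a permutation `σ`, and record whether the bits of `a` in group `i`
have odd parity.  A uniformly random permutation induces a uniformly random ordered
partition into groups of size `n`. -/
def groupParity (k n : ℕ) (a : Fin (k * n) → ZMod 2) (i : Fin k)
    (σ : Equiv.Perm (Fin (k * n))) : ℝ :=
  if (∑ j : Fin n, a (σ (finProdFinEquiv (i, j)))) = 1 then 1 else 0

/-- Covariance of group parities under a uniformly random ordered partition. -/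
def parityCov (k n : ℕ) (a : Fin (k * n) → ZMod 2) (i j : Fin k) : ℝ :=
  permExp (k * n) (fun σ => groupParity k n a i σ * groupParity k n a j σ) -
    permExp (k * n) (groupParity k n a i) * permExp (k * n) (groupParity k n a j)

section counting
variable {N : ℕ} {ι : Type*} [Fintype ι] [DecidableEq ι]

/-- The set of permutations extending a given "pattern" `σ ∘ e = w` is in bijection
with equivalences between complements of the ranges. -/
noncomputable def fiberEquiv (e w : ι ↪ Fin N) :
    {σ : Equiv.Perm (Fin N) // ∀ i, σ (e i) = w i} ≃
      ({x : Fin N // x ∉ Set.range ⇑e} ≃ {x : Fin N // x ∉ Set.range ⇑w}) := by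
  classical
  have mem_iff : ∀ (σ : Equiv.Perm (Fin N)), (∀ i, σ (e i) = w i) →
      ∀ x : Fin N, (x ∉ Set.range ⇑e ↔ σ x ∉ Set.range ⇑w) := by
    intro σ hσ x
    constructor
    · intro hx hc
      obtain ⟨i, hi⟩ := hc
      exact hx ⟨i, σ.injective (by rw [hσ i, hi])⟩
    · intro hx hc
      obtain ⟨i, hi⟩ := hc
      exact hx ⟨i, by rw [← hσ i, hi]⟩
  refine
    { toFun := fun σ => Equiv.subtypeEquiv σ.1 (mem_iff σ.1 σ.2)
      invFun := fun π =>
        ⟨(Equiv.sumCompl (fun x => x ∈ Set.range ⇑e)).symm.trans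
          ((Equiv.sumCongr
            (((Equiv.ofInjective ⇑e e.injective).symm).trans (Equiv.ofInjective ⇑w w.injective)) π).trans
            (Equiv.sumCompl (fun x => x ∈ Set.range ⇑w))), ?_⟩
      left_inv := ?_
      right_inv := ?_ }
  · intro i
    simp [Equiv.sumCompl_symm_apply_of_pos (Set.mem_range_self i),
      Equiv.ofInjective_symm_apply]
  · intro σ
    ext x
    by_cases hx : x ∈ Set.range ⇑e
    · obtain ⟨i, rfl⟩ := hx
      simp [Equiv.sumCompl_symm_apply_of_pos (Set.mem_range_self i),
        Equiv.ofInjective_symm_apply, σ.2 i]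
    · simp [Equiv.sumCompl_symm_apply_of_neg hx, Equiv.subtypeEquiv]
  · intro π
    ext x
    by_cases hx : (x : Fin N) ∈ Set.range ⇑e
    · exact absurd hx x.2
    · simp [Equiv.subtypeEquiv, Equiv.sumCompl_symm_apply_of_neg x.2]

lemma card_fiber (e w : ι ↪ Fin N) :
    (univ.filter fun σ : Equiv.Perm (Fin N) => ∀ i, σ (e i) = w i).card
      = Nat.factorial (N - Fintype.card ι) := by
  classical
  rw [← Fintype.card_subtype]
  rw [Fintype.card_congr (fiberEquiv e w)]
  have hc : ∀ u : ι ↪ Fin N, Fintype.card {x : Fin N // x ∉ Set.range ⇑u}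
      = N - Fintype.card ι := by
    intro u
    rw [Fintype.card_subtype_compl]
    rw [Set.card_range_of_injective u.injective]
    simp
  rw [Fintype.card_equiv (Fintype.equivOfCardEq (by rw [hc, hc]))]
  rw [hc]

lemma card_filter_embcomp (e : ι ↪ Fin N) (p : (ι ↪ Fin N) → Prop) [DecidablePred p] :
    (univ.filter fun σ : Equiv.Perm (Fin N) => p (e.trans σ.toEmbedding)).card
      = (univ.filter p).card * Nat.factorial (N - Fintype.card ι) := by
  classical
  rw [Finset.card_eq_sum_card_fiberwise
    (f := fun σ : Equiv.Perm (Fin N) => e.trans σ.toEmbedding) (t := univ.filter p)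
    (fun σ hσ => by simpa using (mem_filter.mp hσ).2)]
  rw [Finset.sum_congr rfl (fun w hw => ?_), Finset.sum_const, smul_eq_mul]
  have hpw : p w := (mem_filter.mp hw).2
  rw [Finset.filter_filter]
  have : ∀ σ : Equiv.Perm (Fin N),
      (p (e.trans σ.toEmbedding) ∧ e.trans σ.toEmbedding = w) ↔ (∀ i, σ (e i) = w i) := by
    intro σ
    constructor
    · intro h i
      rw [← h.2]; rfl
    · intro h
      have hew : e.trans σ.toEmbedding = w := Function.Embedding.ext h
      exact ⟨hew ▸ hpw, hew⟩
  rw [Finset.filter_congr (fun σ _ => this σ)]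
  exact card_fiber e w

end counting

/-- The embedding of `Fin n` into `Fin (k*n)` given by block `i`. -/
def blockEmb (k n : ℕ) (i : Fin k) : Fin n ↪ Fin (k * n) :=
  ⟨fun j => finProdFinEquiv (i, j), fun j₁ j₂ h => by
    have := finProdFinEquiv.injective h
    exact (Prod.mk.injEq _ _ _ _ ▸ this).2⟩

/-- The single-block parity predicate on embeddings. -/
def blockOdd {k n : ℕ} (a : Fin (k * n) → ZMod 2) (u : Fin n ↪ Fin (k * n)) : Prop :=
  (∑ j : Fin n, a (u j)) = 1

instance {k n : ℕ} (a : Fin (k * n) → ZMod 2) : DecidablePred (blockOdd a) :=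
  fun _ => by unfold blockOdd; infer_instance

lemma sum_groupParity (k n : ℕ) (a : Fin (k * n) → ZMod 2) (i : Fin k) :
    ∑ σ : Equiv.Perm (Fin (k * n)), groupParity k n a i σ
      = ((univ.filter (blockOdd a)).card : ℝ) * Nat.factorial (k * n - n) := by
  classical
  have h : ∀ σ : Equiv.Perm (Fin (k * n)), groupParity k n a i σ =
      if blockOdd a ((blockEmb k n i).trans σ.toEmbedding) then (1:ℝ) else 0 := by
    intro σ; rfl
  rw [Finset.sum_congr rfl (fun σ _ => h σ), Finset.sum_boole]
  rw [card_filter_embcomp (blockEmb k n i) (blockOdd a)]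
  push_cast [Fintype.card_fin]
  ring

/-- The two-block embedding for distinct blocks `i ≠ j`. -/
def pairEmb (k n : ℕ) {i j : Fin k} (hij : i ≠ j) : (Fin n ⊕ Fin n) ↪ Fin (k * n) :=
  ⟨Sum.elim (blockEmb k n i) (blockEmb k n j), by
    rintro (s | s) (t | t) h <;> simp only [Sum.elim_inl, Sum.elim_inr] at h
    · exact congrArg Sum.inl ((blockEmb k n i).injective h)
    · exact absurd (congrArg Prod.fst (finProdFinEquiv.injective h)) hij
    · exact absurd (congrArg Prod.fst (finProdFinEquiv.injective h)).symm hij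
    · exact congrArg Sum.inr ((blockEmb k n j).injective h)⟩

/-- The two-block parity predicate on embeddings. -/
def pairOdd {k n : ℕ} (a : Fin (k * n) → ZMod 2) (u : (Fin n ⊕ Fin n) ↪ Fin (k * n)) : Prop :=
  (∑ j : Fin n, a (u (Sum.inl j))) = 1 ∧ (∑ j : Fin n, a (u (Sum.inr j))) = 1

instance {k n : ℕ} (a : Fin (k * n) → ZMod 2) : DecidablePred (pairOdd a) :=
  fun _ => by unfold pairOdd; infer_instance

lemma sum_groupParity_mul (k n : ℕ) (a : Fin (k * n) → ZMod 2) {i j : Fin k} (hij : i ≠ j) :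
    ∑ σ : Equiv.Perm (Fin (k * n)), groupParity k n a i σ * groupParity k n a j σ
      = ((univ.filter (pairOdd a)).card : ℝ) * Nat.factorial (k * n - (n + n)) := by
  classical
  have h : ∀ σ : Equiv.Perm (Fin (k * n)),
      groupParity k n a i σ * groupParity k n a j σ =
      if pairOdd a ((pairEmb k n hij).trans σ.toEmbedding) then (1:ℝ) else 0 := by
    intro σ
    unfold groupParity pairOdd
    by_cases h1 : (∑ t : Fin n, a (σ (finProdFinEquiv (i, t)))) = 1 <;>
      by_cases h2 : (∑ t : Fin n, a (σ (finProdFinEquiv (j, t)))) = 1 <;>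
      simp [h1, h2, Function.Embedding.trans_apply,
          show ∀ x, pairEmb k n hij x = Sum.elim (blockEmb k n i) (blockEmb k n j) x from fun _ => rfl,
          show ∀ i' t, blockEmb k n i' t = finProdFinEquiv (i', t) from fun _ _ => rfl]
  rw [Finset.sum_congr rfl (fun σ _ => h σ), Finset.sum_boole]
  rw [card_filter_embcomp (pairEmb k n hij) (pairOdd a)]
  push_cast [Fintype.card_sum, Fintype.card_fin]
  ring

lemma card_pairOdd_le (k n : ℕ) (a : Fin (k * n) → ZMod 2) :
    (univ.filter (pairOdd a)).card ≤
      (univ.filter (blockOdd a)).card * (univ.filter (blockOdd a)).card := by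
  classical
  have := Finset.card_le_card_of_injOn
    (f := fun u : (Fin n ⊕ Fin n) ↪ Fin (k * n) =>
      ((Function.Embedding.inl.trans u, Function.Embedding.inr.trans u) :
        (Fin n ↪ Fin (k * n)) × (Fin n ↪ Fin (k * n))))
    (s := univ.filter (pairOdd a))
    (t := (univ.filter (blockOdd a)) ×ˢ (univ.filter (blockOdd a)))
    (fun u hu => by
      obtain ⟨-, h1, h2⟩ := mem_filter.mp hu
      exact mem_product.mpr ⟨mem_filter.mpr ⟨mem_univ _, h1⟩, mem_filter.mpr ⟨mem_univ _, h2⟩⟩)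
    (fun u _ v _ h => by
      obtain ⟨h1, h2⟩ := Prod.mk.injEq _ _ _ _ ▸ h
      apply Function.Embedding.ext
      rintro (t | t)
      · exact DFunLike.congr_fun h1 t
      · exact DFunLike.congr_fun h2 t)
  simpa [Finset.card_product] using this

lemma factorial_ratio_le (m n : ℕ) (hm : 1 ≤ m) : ∀ j : ℕ,
    (Nat.factorial (m + n + j) * Nat.factorial m : ℝ) ≤
      (1 + n / m) ^ j * (Nat.factorial (m + j) * Nat.factorial (m + n))
  | 0 => by simp [mul_comm]
  | (j + 1) => by
    have ih := factorial_ratio_le m n hm j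
    have hm0 : (0:ℝ) < m := by exact_mod_cast hm
    have hkey : ((m + n + j + 1 : ℕ) : ℝ) ≤ (1 + n / m) * (m + j + 1) := by
      have h1 : (n:ℝ) / m * (m + j + 1) ≥ n := by
        rw [ge_iff_le, div_mul_eq_mul_div, le_div_iff₀ hm0]
        nlinarith [Nat.cast_nonneg (α := ℝ) j, Nat.cast_nonneg (α := ℝ) n]
      push_cast
      nlinarith
    have hfac : (Nat.factorial (m + n + (j+1)) : ℝ)
        = ((m + n + j + 1 : ℕ) : ℝ) * Nat.factorial (m + n + j) := by
      rw [show m + n + (j+1) = (m + n + j) + 1 by ring, Nat.factorial_succ]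
      push_cast; ring
    have hfac2 : (Nat.factorial (m + (j+1)) : ℝ)
        = ((m + j + 1 : ℕ) : ℝ) * Nat.factorial (m + j) := by
      rw [show m + (j+1) = (m + j) + 1 by ring, Nat.factorial_succ]
      push_cast; ring
    calc (Nat.factorial (m + n + (j+1)) * Nat.factorial m : ℝ)
        = ((m + n + j + 1 : ℕ) : ℝ) * (Nat.factorial (m + n + j) * Nat.factorial m) := by
          rw [hfac]; ring
      _ ≤ ((m + n + j + 1 : ℕ) : ℝ)
            * ((1 + n / m) ^ j * (Nat.factorial (m + j) * Nat.factorial (m + n))) := by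
          apply mul_le_mul_of_nonneg_left ih (by positivity)
      _ ≤ ((1 + n / m) * (m + j + 1))
            * ((1 + n / m) ^ j * (Nat.factorial (m + j) * Nat.factorial (m + n))) := by
          apply mul_le_mul_of_nonneg_right hkey (by positivity)
      _ = (1 + n / m) ^ (j+1) * (Nat.factorial (m + (j+1)) * Nat.factorial (m + n)) := by
          rw [hfac2]; push_cast; ring

lemma eventually_ratio (n : ℕ) {δ : ℝ} (hδ : 0 < δ) :
    ∃ M : ℕ, ∀ m : ℕ, M ≤ m → (1 + (n:ℝ) / m) ^ n ≤ 1 + δ := by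
  have h0 : Filter.Tendsto (fun m : ℕ => (n:ℝ) / m) Filter.atTop (nhds 0) :=
    tendsto_const_div_atTop_nhds_zero_nat (n:ℝ)
  have h1 : Filter.Tendsto (fun m : ℕ => (1 + (n:ℝ) / m) ^ n) Filter.atTop (nhds 1) := by
    have := (tendsto_const_nhds (x := (1:ℝ)) (f := Filter.atTop (α := ℕ))).add h0
    simpa using this.pow n
  have h2 := h1.eventually_le_const (by linarith : (1:ℝ) < 1 + δ)
  obtain ⟨M, hM⟩ := Filter.eventually_atTop.mp h2
  exact ⟨M, hM⟩

set_option maxHeartbeats 1000000 in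
/-- For `N₀ + N₁` bits with exactly `N₀` zeros and `N₁` ones partitioned uniformly at random
into `k = (N₀+N₁)/n` ordered groups of size `n`, and group parities `Yᵢ`:  for any `δ > 0`
there is `N'` such that whenever `min {N₀, N₁} ≥ N'`, one has
`Cov[Yᵢ, Yⱼ] ≤ δ (E[Y₁])²` for all `i ≠ j`. -/
theorem parity_cov_le {n : ℕ} (hn : 1 ≤ n) {δ : ℝ} (hδ : 0 < δ) :
    ∃ N' : ℕ, ∀ (k N₀ N₁ : ℕ), N₀ + N₁ = k * n → N' ≤ min N₀ N₁ →
      ∀ (a : Fin (k * n) → ZMod 2),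
        (Finset.univ.filter fun x => a x = 0).card = N₀ →
        (Finset.univ.filter fun x => a x = 1).card = N₁ →
        ∀ (i j : Fin k), i ≠ j →
          parityCov k n a i j ≤
            δ * (permExp (k * n) (groupParity k n a ⟨0, i.pos⟩)) ^ 2 := by
  classical
  obtain ⟨M, hM⟩ := eventually_ratio n hδ
  refine ⟨M + 2 * n + 1, ?_⟩
  intro k N₀ N₁ hsum hmin a _ _ i j hij
  have hkn : 2 * (M + 2 * n + 1) ≤ k * n := by omega
  set m : ℕ := k * n - (n + n) with hm
  have hm1 : 1 ≤ m := by omega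
  have hmM : M ≤ m := by omega
  have hmn : k * n - n = m + n := by omega
  have hknn : k * n = m + n + n := by omega
  set A : ℝ := ((univ.filter (blockOdd a)).card : ℝ) with hA
  set B : ℝ := ((univ.filter (pairOdd a)).card : ℝ) with hB
  set F : ℝ := (Nat.factorial (k * n) : ℝ) with hF
  set G : ℝ := (Nat.factorial (m + n) : ℝ) with hG
  set H : ℝ := (Nat.factorial m : ℝ) with hH
  have hcard : (Fintype.card (Equiv.Perm (Fin (k * n))) : ℝ) = F := by
    rw [Fintype.card_perm, Fintype.card_fin]
  have hE : ∀ i' : Fin k, permExp (k * n) (groupParity k n a i') = A * G / F := by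
    intro i'
    unfold permExp
    rw [sum_groupParity k n a i', hcard, hmn]
  have hq : permExp (k * n) (fun σ => groupParity k n a i σ * groupParity k n a j σ)
      = B * H / F := by
    unfold permExp
    rw [sum_groupParity_mul k n a hij, hcard]
  have hF0 : (0:ℝ) < F := by
    rw [hF]; exact_mod_cast Nat.factorial_pos _
  have hG0 : (0:ℝ) < G := by
    rw [hG]; exact_mod_cast Nat.factorial_pos _
  have hH0 : (0:ℝ) < H := by
    rw [hH]; exact_mod_cast Nat.factorial_pos _
  have hA0 : (0:ℝ) ≤ A := by rw [hA]; exact Nat.cast_nonneg _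
  have hBA : B ≤ A * A := by
    rw [hA, hB]
    exact_mod_cast card_pairOdd_le k n a
  have hHF : H * F ≤ (1 + δ) * (G * G) := by
    have hr := factorial_ratio_le m n hm1 n
    have hb := hM m hmM
    have hGG : (0:ℝ) ≤ G * G := by positivity
    have hpow0 : (0:ℝ) ≤ (1 + (n:ℝ) / m) ^ n := by positivity
    calc H * F = (Nat.factorial (m + n + n) * Nat.factorial m : ℝ) := by
          rw [hH, hF, hknn]; ring
      _ ≤ (1 + (n:ℝ) / m) ^ n * (Nat.factorial (m + n) * Nat.factorial (m + n)) := hr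
      _ = (1 + (n:ℝ) / m) ^ n * (G * G) := by rw [hG]
      _ ≤ (1 + δ) * (G * G) := mul_le_mul_of_nonneg_right hb hGG
  have hgoal : B * H / F ≤ (1 + δ) * (A * G / F) ^ 2 := by
    have key1 : B * (H * F) ≤ (1 + δ) * (A * G) ^ 2 := by
      calc B * (H * F) ≤ (A * A) * (H * F) :=
            mul_le_mul_of_nonneg_right hBA (by positivity)
        _ ≤ (A * A) * ((1 + δ) * (G * G)) :=
            mul_le_mul_of_nonneg_left hHF (mul_self_nonneg A)
        _ = (1 + δ) * (A * G) ^ 2 := by ring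
    calc B * H / F = (B * (H * F)) / F ^ 2 := by
          field_simp
      _ ≤ ((1 + δ) * (A * G) ^ 2) / F ^ 2 := by gcongr
      _ = (1 + δ) * (A * G / F) ^ 2 := by
          field_simp
  have hcov : parityCov k n a i j = B * H / F - (A * G / F) * (A * G / F) := by
    unfold parityCov
    rw [hq, hE i, hE j]
  rw [hcov, hE ⟨0, i.pos⟩]
  nlinarith [hgoal]
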